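/- Every point inside the closed disk of radius 1/√3 centered at the origin is within distance 1/√3 of at least one of the three points A = (0, -1/√3), B = (1/2, 1/(2√3)), C = (-1/2, 1/(2√3)). -/

import Mathlib

noncomputable def pt (x y : ℝ) : EuclideanSpace ℝ (Fin 2) := WithLp.toLp 2 ![x, y]

lemma key (p : EuclideanSpace ℝ (Fin 2)) (a b : ℝ)
    (h : (p 0 - a)^2 + (p 1 - b)^2 ≤ 1/3) : dist p (pt a b) ≤ 1 / Real.sqrt 3 := by
  rw [EuclideanSpace.dist_eq]
  simp only [pt, PiLp.toLp_apply, Fin.sum_univ_two, Matrix.cons_val_zero, Matrix.cons_val_one, Matrix.head_cons,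
    Real.dist_eq, sq_abs]
  rw [one_div, ← Real.sqrt_inv]
  exact Real.sqrt_le_sqrt (by norm_num at h ⊢; linarith)

lemma key2 (p : EuclideanSpace ℝ (Fin 2)) (hp : dist p (pt 0 0) ≤ 1 / Real.sqrt 3) :
    (p 0)^2 + (p 1)^2 ≤ 1/3 := by
  rw [EuclideanSpace.dist_eq] at hp
  simp only [pt, PiLp.toLp_apply, Fin.sum_univ_two, Matrix.cons_val_zero, Matrix.cons_val_one, Matrix.head_cons,
    Real.dist_eq, sq_abs, sub_zero] at hp
  rw [one_div, ← Real.sqrt_inv] at hp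
  have h1 : (p 0)^2 + (p 1)^2 = Real.sqrt ((p 0)^2 + (p 1)^2) ^ 2 :=
    (Real.sq_sqrt (by positivity)).symm
  have h2 : Real.sqrt ((p 0)^2 + (p 1)^2) ^ 2 ≤ Real.sqrt 3⁻¹ ^ 2 :=
    pow_le_pow_left₀ (Real.sqrt_nonneg _) hp 2
  have h3 : Real.sqrt (3⁻¹ : ℝ) ^ 2 = 3⁻¹ := Real.sq_sqrt (by norm_num)
  rw [h1]; rw [h3] at h2; linarith

lemma core (x y s : ℝ) (hs : s^2 = 3) (hr : x^2 + y^2 ≤ 1/3)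
    (h1 : 0 < x^2 + y^2 + 2*s*y/3)
    (h2 : 0 < x^2 + y^2 - x - s*y/3)
    (h3 : 0 < x^2 + y^2 + x - s*y/3) : False := by
  nlinarith [mul_pos h2 h3, mul_pos h1 (add_pos h2 h3), sq_nonneg x, sq_nonneg y,
    sq_nonneg (s*y), mul_nonneg (sub_nonneg.2 hr) h1.le, sq_nonneg (x^2+y^2 - s*y/3)]

theorem stmt_2 (p : EuclideanSpace ℝ (Fin 2))
    (hp : dist p (pt 0 0) ≤ 1 / Real.sqrt 3) :
    dist p (pt 0 (-(1 / Real.sqrt 3))) ≤ 1 / Real.sqrt 3 ∨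
    dist p (pt (1 / 2) (1 / (2 * Real.sqrt 3))) ≤ 1 / Real.sqrt 3 ∨
    dist p (pt (-(1 / 2)) (1 / (2 * Real.sqrt 3))) ≤ 1 / Real.sqrt 3 := by
  set x := p 0 with hx
  set y := p 1 with hy
  set s := Real.sqrt 3 with hsdef
  have hs : s^2 = 3 := Real.sq_sqrt (by norm_num)
  have hs0 : 0 < s := Real.sqrt_pos.2 (by norm_num)
  have hr : x^2 + y^2 ≤ 1/3 := key2 p hp
  have e1 : (1:ℝ)/s = s/3 := by field_simp; nlinarith
  have e2 : (1:ℝ)/(2*s) = s/6 := by field_simp; nlinarith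
  rcases le_or_gt (x^2 + y^2 + 2*s*y/3) 0 with h1 | h1
  · left; apply key; rw [e1]; nlinarith
  rcases le_or_gt (x^2 + y^2 - x - s*y/3) 0 with h2 | h2
  · right; left; apply key; rw [e2]; nlinarith
  rcases le_or_gt (x^2 + y^2 + x - s*y/3) 0 with h3 | h3
  · right; right; apply key; rw [e2]; nlinarith
  exact absurd (core x y s hs hr h1 h2 h3) not_false
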